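/- For the transformed Kripke structure (K_Γ, F_Γ) built from a fair Kripke structure (K,F) by adding summary edges, the set Traces(K_Γ,F_Γ) restricted to well-formed traces equals stfr^#_Γ(Traces(K,F)); in particular every trace in stfr^#_Γ(Traces(K,F)) is well-formed, meaning either it is a Γ-stutter-free trace over AP, or there is exactly one position i+1 where # holds and removing that position yields the Γ-stutter trace of the result. -/

import Mathlib

/-- Block starts of the stutter factorization w.r.t. a valuation `v`: position `0`,
together with every position where the valuation differs from the previous one. -/
def startSet {α : Type} (v : ℕ → α) : Set ℕ :=
  {i | i = 0 ∨ v (i - 1) ≠ v i}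

/-- The `(Γ,ω)`-stutter factorization (as a set of positions): the block starts, together
with all positions of the final infinite block (in case only finitely many blocks exist). -/
def omegaFact {α : Type} (v : ℕ → α) : Set ℕ :=
  startSet v ∪ {i | ∀ j, i < j → j ∉ startSet v}

/-- The increasing enumeration `ℓ_k` of the `(Γ,ω)`-stutter factorization. -/
noncomputable def factPos {α : Type} (v : ℕ → α) (k : ℕ) : ℕ :=
  Nat.nth (· ∈ omegaFact v) k

/-- The least element of the `(Γ,ω)`-stutter factorization strictly greater than `i`. -/
noncomputable def succPos {α : Type} (v : ℕ → α) (i : ℕ) : ℕ :=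
  sInf {ℓ ∈ omegaFact v | i < ℓ}

/-- The greatest element of the `(Γ,ω)`-stutter factorization strictly smaller than `i`. -/
noncomputable def predPos {α : Type} (v : ℕ → α) (i : ℕ) : ℕ :=
  sSup {ℓ ∈ omegaFact v | ℓ < i}

/-- A Kripke structure over atomic propositions `AP` with states `S`. -/
structure Kripke (AP S : Type) where
  init : Set S
  E : S → S → Prop
  lab : S → Set AP

/-- A path of a Kripke structure. -/
def Kripke.IsPath {AP S : Type} (K : Kripke AP S) (π : ℕ → S) : Prop :=
  π 0 ∈ K.init ∧ ∀ i, K.E (π i) (π (i + 1))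

/-- The set of traces of a Kripke structure. -/
def Kripke.traces {AP S : Type} (K : Kripke AP S) : Set (ℕ → Set AP) :=
  {σ | ∃ π : ℕ → S, K.IsPath π ∧ σ = fun i => K.lab (π i)}

/-- The set of traces of `F`-fair paths of a Kripke structure. -/
def Kripke.fairTraces {AP S : Type} (K : Kripke AP S) (F : Set S) : Set (ℕ → Set AP) :=
  {σ | ∃ π : ℕ → S, K.IsPath π ∧ {i | π i ∈ F}.Infinite ∧ σ = fun i => K.lab (π i)}

/-- The propositional Γ-valuation of a trace at a position. -/
def pval {β : Type} (Γ : Set β) (σ : ℕ → Set β) (i : ℕ) : Set β := σ i ∩ Γ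

/-- The Γ-stutter trace of a trace, for a propositional set Γ. -/
noncomputable def pstfr {β : Type} (Γ : Set β) (σ : ℕ → Set β) : ℕ → Set β :=
  fun k => σ (factPos (pval Γ σ) k)

/-- The fresh proposition `#`. -/
def hashP {AP : Type} : AP ⊕ Unit := Sum.inr ()

/-- The extension `stfr^#_Γ(L)` of `stfr_Γ(L)`: it contains the Γ-stutter traces of the
traces of `L` (lifted to `AP ∪ {#}`), and additionally, for each `σ ∈ L` and each position
`i` strictly between two consecutive elements `ℓ_k < i < ℓ_{k+1}` of the `(Γ,ω)`-stutter
factorization of `σ`, the trace `σ(ℓ_0)…σ(ℓ_k)·(σ(i) ∪ {#})·σ(ℓ_{k+1})σ(ℓ_{k+2})⋯`. -/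
noncomputable def stfrHash {AP : Type} (Γ : Set AP) (L : Set (ℕ → Set AP)) :
    Set (ℕ → Set (AP ⊕ Unit)) :=
  {τ | ∃ σ ∈ L, τ = fun m => Sum.inl '' pstfr Γ σ m} ∪
  {τ | ∃ σ ∈ L, ∃ k i : ℕ,
    factPos (pval Γ σ) k < i ∧ i < factPos (pval Γ σ) (k + 1) ∧
    τ = fun m =>
      if m ≤ k then Sum.inl '' σ (factPos (pval Γ σ) m)
      else if m = k + 1 then insert hashP (Sum.inl '' σ i)
      else Sum.inl '' σ (factPos (pval Γ σ) (m - 1))}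

/-- A trace over `AP ∪ {#}` is well-formed if either it is a Γ-stutter-free trace over
`AP`, or there is exactly one position `i+1` where `#` holds and removing that position
yields its Γ-stutter trace. -/
noncomputable def WellFormed {AP : Type} (Γ : Set AP) (τ : ℕ → Set (AP ⊕ Unit)) : Prop :=
  ((∀ m, hashP ∉ τ m) ∧ pstfr (Sum.inl '' Γ) τ = τ) ∨
  (∃ i : ℕ, (∀ m, hashP ∈ τ m ↔ m = i + 1) ∧
    pstfr (Sum.inl '' Γ) τ = fun m => if m ≤ i then τ m else τ (m + 1))

/-- `R_Γ(K)`: pairs `(s,s')` such that the Γ-valuation of `s` and `s'` differ and there is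
a finite path `s·ρ·s'` of `K` along which the Γ-valuation changes only at the final state. -/
def RGamma {AP S : Type} (K : Kripke AP S) (Γ : Set AP) (s s' : S) : Prop :=
  K.lab s ∩ Γ ≠ K.lab s' ∩ Γ ∧
  ∃ (m : ℕ) (π : ℕ → S), 1 ≤ m ∧ π 0 = s ∧ π m = s' ∧
    (∀ i < m, K.E (π i) (π (i + 1))) ∧ (∀ i < m, K.lab (π i) ∩ Γ = K.lab s ∩ Γ)

/-- `R_Γ(K,F)`: as `R_Γ(K)`, additionally requiring that the finite path visits `F`. -/
def RGammaF {AP S : Type} (K : Kripke AP S) (Γ : Set AP) (F : Set S) (s s' : S) : Prop :=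
  K.lab s ∩ Γ ≠ K.lab s' ∩ Γ ∧
  ∃ (m : ℕ) (π : ℕ → S), 1 ≤ m ∧ π 0 = s ∧ π m = s' ∧
    (∀ i < m, K.E (π i) (π (i + 1))) ∧ (∀ i < m, K.lab (π i) ∩ Γ = K.lab s ∩ Γ) ∧
    (∃ i ≤ m, π i ∈ F)

/-- `R^#_Γ(K)`: pairs `(s,s')` with the same Γ-valuation joined by a finite path of length
at least 2 along which the Γ-valuation never changes. -/
def RHash {AP S : Type} (K : Kripke AP S) (Γ : Set AP) (s s' : S) : Prop :=
  K.lab s ∩ Γ = K.lab s' ∩ Γ ∧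
  ∃ (m : ℕ) (π : ℕ → S), 1 ≤ m ∧ π 0 = s ∧ π m = s' ∧
    (∀ i < m, K.E (π i) (π (i + 1))) ∧ (∀ i < m, K.lab (π i) ∩ Γ = K.lab s ∩ Γ)

/-- `R^#_Γ(K,F)`: as `R^#_Γ(K)`, additionally requiring that the finite path visits `F`. -/
def RHashF {AP S : Type} (K : Kripke AP S) (Γ : Set AP) (F : Set S) (s s' : S) : Prop :=
  K.lab s ∩ Γ = K.lab s' ∩ Γ ∧
  ∃ (m : ℕ) (π : ℕ → S), 1 ≤ m ∧ π 0 = s ∧ π m = s' ∧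
    (∀ i < m, K.E (π i) (π (i + 1))) ∧ (∀ i < m, K.lab (π i) ∩ Γ = K.lab s ∩ Γ) ∧
    (∃ i ≤ m, π i ∈ F)

/-- The transformed Kripke structure `K_Γ` over `AP ∪ {#}` with states
`S × 2^{{acc,#}}` (encoded as `S × Bool × Bool`, where the first Boolean is `acc ∈ T` and
the second is `# ∈ T`), obtained by adding summary edges for the relations `R_Γ` and
`R^#_Γ`, with `#` marking the targets of `R^#`-summary edges and `acc` tracking visits
to `F`. -/
def stutterKripke {AP S : Type} (K : Kripke AP S) (F : Set S) (Γ : Set AP) :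
    Kripke (AP ⊕ Unit) (S × Bool × Bool) where
  init := {x | x.1 ∈ K.init ∧ x.2.1 = false ∧ x.2.2 = false}
  E := fun x y =>
    ((K.E x.1 y.1 ∨ RGamma K Γ x.1 y.1) ∧ y.2.2 = false ∧ (y.2.1 = true ↔ y.1 ∈ F)) ∨
    (RGammaF K Γ F x.1 y.1 ∧ y.2.2 = false ∧ y.2.1 = true) ∨
    (RHash K Γ x.1 y.1 ∧ x.2.2 = false ∧ y.2.2 = true ∧ (y.2.1 = true ↔ y.1 ∈ F)) ∨
    (RHashF K Γ F x.1 y.1 ∧ x.2.2 = false ∧ y.2.2 = true ∧ y.2.1 = true)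
  lab := fun x => Sum.inl '' K.lab x.1 ∪ (if x.2.2 = true then {hashP} else ∅)

/-- The fairness set `F_Γ` of `K_Γ`: the states marked with `acc`. -/
def stutterFair {S : Type} : Set (S × Bool × Bool) := {x | x.2.1 = true}

section Aux

variable {α β : Type}

lemma zero_mem_startSet (v : ℕ → α) : 0 ∈ startSet v := Or.inl rfl

lemma mem_startSet_iff {v : ℕ → α} {i : ℕ} : i ∈ startSet v ↔ i = 0 ∨ v (i-1) ≠ v i :=
  Iff.rfl

lemma not_mem_startSet {v : ℕ → α} {i : ℕ} (h : i ∉ startSet v) :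
    i ≠ 0 ∧ v (i-1) = v i := by
  rw [mem_startSet_iff] at h; push_neg at h; exact h

lemma omegaFact_infinite (v : ℕ → α) : (omegaFact v).Infinite := by
  apply Set.infinite_of_forall_exists_gt
  intro a
  by_cases h : ∃ j, a < j ∧ j ∈ startSet v
  · obtain ⟨j, hj, hjs⟩ := h
    exact ⟨j, Or.inl hjs, hj⟩
  · push_neg at h
    exact ⟨a+1, Or.inr (fun j hj => h j (by omega)), by omega⟩

lemma const_of_no_start (v : ℕ → α) {a j : ℕ} (h : a ≤ j)
    (hn : ∀ t, a < t → t ≤ j → t ∉ startSet v) : v j = v a := by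
  induction j with
  | zero => have : a = 0 := by omega
            rw [this]
  | succ j ih =>
    rcases Nat.eq_or_lt_of_le h with h' | h'
    · rw [h']
    · have hj : a ≤ j := by omega
      have h1 : v j = v a := ih hj (fun t ht ht' => hn t ht (by omega))
      have h2 := not_mem_startSet (hn (j+1) (by omega) le_rfl)
      simp only [Nat.add_sub_cancel] at h2
      rw [← h2.2, h1]

lemma factPos_strictMono (v : ℕ → α) : StrictMono (factPos v) :=
  Nat.nth_strictMono (omegaFact_infinite v)

lemma factPos_mem (v : ℕ → α) (k : ℕ) : factPos v k ∈ omegaFact v :=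
  Nat.nth_mem_of_infinite (omegaFact_infinite v) k

lemma factPos_zero (v : ℕ → α) : factPos v 0 = 0 := by
  rw [factPos, Nat.nth_zero]
  exact Nat.sInf_eq_zero.mpr (Or.inl (show 0 ∈ omegaFact v from Or.inl (zero_mem_startSet v)))

lemma not_mem_of_between (v : ℕ → α) {k x : ℕ} (h1 : factPos v k < x)
    (h2 : x < factPos v (k+1)) : x ∉ omegaFact v := by
  intro hx
  classical
  have hinf := omegaFact_infinite v
  have hnc := Nat.nth_count (p := (· ∈ omegaFact v)) hx
  have hc1 : k < Nat.count (· ∈ omegaFact v) x :=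
    (Nat.lt_nth_iff_count_lt (p := (· ∈ omegaFact v)) hinf).mpr h1
  have : factPos v (k+1) ≤ Nat.nth (· ∈ omegaFact v) (Nat.count (· ∈ omegaFact v) x) :=
    (factPos_strictMono v).monotone hc1
  rw [hnc] at this
  omega

lemma const_on_block (v : ℕ → α) {k j : ℕ} (h1 : factPos v k ≤ j)
    (h2 : j < factPos v (k+1)) : v j = v (factPos v k) := by
  apply const_of_no_start v h1
  intro t ht ht'
  exact fun hs => not_mem_of_between v ht (by omega) (Or.inl hs)

lemma block_dichotomy (v : ℕ → α) (k : ℕ) :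
    (factPos v (k+1) ∈ startSet v ∧ v (factPos v (k+1)) ≠ v (factPos v k)) ∨
    (factPos v (k+1) = factPos v k + 1 ∧ v (factPos v (k+1)) = v (factPos v k)) := by
  have hlt : factPos v k < factPos v (k+1) := factPos_strictMono v (by omega)
  by_cases hs : factPos v (k+1) ∈ startSet v
  · left
    refine ⟨hs, ?_⟩
    rcases hs with h0 | hne
    · omega
    · have : v (factPos v (k+1) - 1) = v (factPos v k) :=
        const_on_block v (by omega) (by omega)
      rw [this] at hne
      exact fun h => hne h.symm
  · right
    have heq : factPos v (k+1) = factPos v k + 1 := by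
      by_contra hne
      have hx : factPos v k < factPos v k + 1 := by omega
      have hx2 : factPos v k + 1 < factPos v (k+1) := by omega
      apply not_mem_of_between v hx hx2
      right
      intro j hj hjs
      rcases Nat.lt_trichotomy j (factPos v (k+1)) with h' | h' | h'
      · exact not_mem_of_between v (by omega) h' (Or.inl hjs)
      · exact hs (h' ▸ hjs)
      · rcases factPos_mem v (k+1) with h'' | h''
        · exact hs h''
        · exact h'' j h' hjs
    refine ⟨heq, ?_⟩
    have := (not_mem_startSet hs).2
    rw [heq] at this ⊢
    simpa using this.symm

lemma start_of_gap (v : ℕ → α) {k i : ℕ} (h1 : factPos v k < i)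
    (h2 : i < factPos v (k+1)) :
    factPos v (k+1) ∈ startSet v ∧ v (factPos v (k+1)) ≠ v (factPos v k) := by
  rcases block_dichotomy v k with h | h
  · exact h
  · omega

/-- If the factorization position `k+1` is not a block start, the valuation is constant
from position `factPos v k` on. -/
lemma tail_const (v : ℕ → α) {k : ℕ} (h : factPos v (k+1) ∉ startSet v)
    {x : ℕ} (hx : factPos v k ≤ x) : v x = v (factPos v k) := by
  have htail : ∀ j, factPos v (k+1) < j → j ∉ startSet v := by
    rcases factPos_mem v (k+1) with h' | h'
    · exact absurd h' h
    · exact h'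
  rcases Nat.lt_or_ge x (factPos v (k+1)) with h' | h'
  · exact const_on_block v hx h'
  · have h1 : v x = v (factPos v (k+1)) := by
      apply const_of_no_start v h'
      intro t ht ht' hts
      exact htail t ht hts
    have h2 : v (factPos v (k+1)) = v (factPos v k) := by
      have := (not_mem_startSet h).2
      have h3 : v (factPos v (k+1) - 1) = v (factPos v k) :=
        const_on_block v (by have := factPos_strictMono v (show k < k+1 by omega); omega)
          (by have := factPos_strictMono v (show k < k+1 by omega); omega)
      rw [← this, h3]
    rw [h1, h2]

lemma nth_eq_ofRange {p : ℕ → Prop} {e : ℕ → ℕ} (he : StrictMono e)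
    (hr : ∀ n, p n ↔ n ∈ Set.range e) (k : ℕ) : Nat.nth p k = e k := by
  classical
  have hpe : p (e k) := (hr _).mpr ⟨k, rfl⟩
  have hcount : Nat.count p (e k) = k := by
    rw [Nat.count_eq_card_filter_range]
    have hset : (Finset.range (e k)).filter p = (Finset.range k).image e := by
      ext j
      simp only [Finset.mem_filter, Finset.mem_range, Finset.mem_image]
      constructor
      · rintro ⟨hj, hp⟩
        obtain ⟨m, rfl⟩ := (hr j).mp hp
        exact ⟨m, he.lt_iff_lt.mp hj, rfl⟩
      · rintro ⟨m, hm, rfl⟩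
        exact ⟨he hm, (hr _).mpr ⟨m, rfl⟩⟩
    rw [hset, Finset.card_image_of_injective _ he.injective, Finset.card_range]
  conv_lhs => rw [← hcount]
  exact Nat.nth_count hpe

lemma omegaFact_eq_range (u : ℕ → α) (e : ℕ → ℕ) (he : StrictMono e)
    (hnA : ∀ n, n ∉ Set.range e → n ∉ omegaFact u)
    (H : ∀ m, u (factPos u m) = u (e m)) :
    ∀ n, n ∈ omegaFact u ↔ n ∈ Set.range e := by
  classical
  intro n
  induction n using Nat.strong_induction_on with
  | _ n ih =>
  constructor
  · intro h
    by_contra hc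
    exact hnA n hc h
  · rintro ⟨t, rfl⟩
    by_contra hn
    have hns := not_mem_startSet (fun hs => hn (Or.inl hs))
    have hnt : ∃ b, e t < b ∧ b ∈ startSet u := by
      by_contra hb
      push_neg at hb
      exact hn (Or.inr hb)
    set B := {j | e t < j ∧ j ∈ startSet u} with hB
    have hBne : B.Nonempty := hnt
    have hbB : sInf B ∈ B := Nat.sInf_mem hBne
    set b := sInf B with hbdef
    have hb1 : e t < b := hbB.1
    have hbs : b ∈ startSet u := hbB.2
    have hmin : ∀ j, e t < j → j < b → j ∉ startSet u := by
      intro j h1 h2 hj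
      have : b ≤ j := Nat.sInf_le ⟨h1, hj⟩
      omega
    -- nothing of omegaFact u in [e t, b)
    have hgapA : ∀ j, e t ≤ j → j < b → j ∉ omegaFact u := by
      intro j h1 h2 hj
      rcases Nat.eq_or_lt_of_le h1 with h' | h'
      · exact hn (h' ▸ hj)
      · rcases hj with hj | hj
        · exact hmin j h' h2 hj
        · exact hj b (by omega) hbs
    have hcount : Nat.count (· ∈ omegaFact u) b = t := by
      rw [Nat.count_eq_card_filter_range]
      have hset : (Finset.range b).filter (· ∈ omegaFact u) = (Finset.range t).image e := by
        ext j
        simp only [Finset.mem_filter, Finset.mem_range, Finset.mem_image]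
        constructor
        · rintro ⟨hj, hp⟩
          have hjet : j < e t := by
            rcases Nat.lt_or_ge j (e t) with h' | h'
            · exact h'
            · exact absurd hp (hgapA j h' hj)
          obtain ⟨m, rfl⟩ := (ih j hjet).mp hp
          exact ⟨m, he.lt_iff_lt.mp hjet, rfl⟩
        · rintro ⟨m, hm, rfl⟩
          have h1 : e m < e t := he hm
          exact ⟨by omega, (ih (e m) h1).mpr ⟨m, rfl⟩⟩
      rw [hset, Finset.card_image_of_injective _ he.injective, Finset.card_range]
    have hnth : factPos u t = b := by
      rw [factPos, ← hcount]
      exact Nat.nth_count (Or.inl hbs)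
    have hconst : u (b - 1) = u (e t - 1) := by
      apply const_of_no_start u (by omega)
      intro s hs1 hs2 hss
      have h0 : e t ≠ 0 := hns.1
      rcases Nat.lt_or_ge (e t) s with h' | h'
      · exact hmin s h' (by omega) hss
      · have hse : s = e t := by omega
        exact hn (Or.inl (hse ▸ hss))
    have hbne : u (b-1) ≠ u b := by
      rcases hbs with h0 | hne
      · omega
      · exact hne
    apply hbne
    rw [hconst, hns.2, ← H t, hnth]

lemma factPos_eq_ofRange {u : ℕ → α} {e : ℕ → ℕ} (he : StrictMono e)
    (hr : ∀ n, n ∈ omegaFact u ↔ n ∈ Set.range e) (k : ℕ) : factPos u k = e k :=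
  nth_eq_ofRange he hr k

lemma startSet_comp_inj {f : α → β} (hf : Function.Injective f) (v : ℕ → α) :
    startSet (fun i => f (v i)) = startSet v := by
  ext i
  simp only [startSet, Set.mem_setOf_eq, ne_eq, hf.eq_iff]

lemma omegaFact_comp_inj {f : α → β} (hf : Function.Injective f) (v : ℕ → α) :
    omegaFact (fun i => f (v i)) = omegaFact v := by
  unfold omegaFact
  rw [startSet_comp_inj hf]

lemma factPos_comp_inj {f : α → β} (hf : Function.Injective f) (v : ℕ → α) :
    factPos (fun i => f (v i)) = factPos v := by
  unfold factPos
  rw [omegaFact_comp_inj hf]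

lemma hashP_not_mem_inl {AP : Type} (A : Set AP) :
    hashP ∉ (Sum.inl '' A : Set (AP ⊕ Unit)) := by
  simp [hashP]

lemma inl_image_inter {AP : Type} (A B : Set AP) :
    (Sum.inl '' A : Set (AP ⊕ Unit)) ∩ (Sum.inl '' B) = Sum.inl '' (A ∩ B) :=
  (Set.image_inter Sum.inl_injective).symm

end Aux

section WF

variable {AP : Type}

lemma wf_pure (Γ : Set AP) (σ : ℕ → Set AP) :
    WellFormed Γ (fun m => Sum.inl '' pstfr Γ σ m) := by
  left
  set v := pval Γ σ with hv
  set w : ℕ → Set AP := fun m => v (factPos v m) with hw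
  refine ⟨fun m => hashP_not_mem_inl _, ?_⟩
  have hpv : pval (Sum.inl '' Γ : Set (AP ⊕ Unit)) (fun m => Sum.inl '' pstfr Γ σ m)
      = fun m => Sum.inl '' (w m) := by
    funext m
    simp only [pval, inl_image_inter]
    rfl
  have hmono := factPos_strictMono v
  have huniv : ∀ n, n ∈ omegaFact w ↔ n ∈ Set.range (id : ℕ → ℕ) := by
    intro n
    simp only [Set.range_id, Set.mem_univ, iff_true]
    cases n with
    | zero => exact Or.inl (zero_mem_startSet w)
    | succ m =>
      by_cases hs : factPos v (m+1) ∈ startSet v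
      · left
        right
        show w (m+1-1) ≠ w (m+1)
        simp only [Nat.add_sub_cancel]
        have h0 : factPos v (m+1) ≠ 0 := by
          have := hmono (show m < m+1 by omega); omega
        rcases hs with h' | h'
        · omega
        · have hc : v (factPos v (m+1) - 1) = v (factPos v m) :=
            const_on_block v (by have := hmono (show m < m+1 by omega); omega)
              (by have := hmono (show m < m+1 by omega); omega)
          rw [hc] at h'
          exact fun hx => h' hx
      · right
        intro j hj hjs
        have h1 : w j = v (factPos v m) :=
          tail_const v hs (hmono.monotone (show m ≤ j by omega))
        have h2 : w (j-1) = v (factPos v m) :=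
          tail_const v hs (hmono.monotone (show m ≤ j-1 by omega))
        rcases hjs with h' | h'
        · omega
        · exact h' (by rw [h1, h2])
  have hfp : factPos (pval (Sum.inl '' Γ : Set (AP ⊕ Unit)) (fun m => Sum.inl '' pstfr Γ σ m)) = factPos w := by
    rw [hpv]
    exact factPos_comp_inj (Set.image_injective.mpr Sum.inl_injective) w
  funext m
  show (fun m => Sum.inl '' pstfr Γ σ m) (factPos (pval (Sum.inl '' Γ) _) m) = _
  rw [hfp, factPos_eq_ofRange strictMono_id huniv m]
  rfl

lemma wf_hash (Γ : Set AP) (σ : ℕ → Set AP) (k i : ℕ)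
    (h1 : factPos (pval Γ σ) k < i) (h2 : i < factPos (pval Γ σ) (k+1)) :
    WellFormed Γ (fun m =>
      if m ≤ k then Sum.inl '' σ (factPos (pval Γ σ) m)
      else if m = k + 1 then insert hashP (Sum.inl '' σ i)
      else Sum.inl '' σ (factPos (pval Γ σ) (m - 1))) := by
  right
  set v := pval Γ σ with hv
  obtain ⟨hstart, hne⟩ := start_of_gap v h1 h2
  have hmono := factPos_strictMono v
  refine ⟨k, ?_, ?_⟩
  · intro m
    by_cases hm : m ≤ k
    · simp only [if_pos hm]
      constructor
      · intro h; exact absurd h (hashP_not_mem_inl _)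
      · omega
    · by_cases hm2 : m = k+1
      · simp only [if_neg hm, if_pos hm2]
        simp [hm2]
      · simp only [if_neg hm, if_neg hm2]
        constructor
        · intro h; exact absurd h (hashP_not_mem_inl _)
        · omega
  · set w : ℕ → Set AP := fun m =>
      if m ≤ k then v (factPos v m) else if m = k+1 then v i else v (factPos v (m-1))
      with hwdef
    have hpv : pval (Sum.inl '' Γ : Set (AP ⊕ Unit))
        (fun m => if m ≤ k then Sum.inl '' σ (factPos v m)
          else if m = k + 1 then insert hashP (Sum.inl '' σ i)
          else Sum.inl '' σ (factPos v (m - 1))) = fun m => Sum.inl '' (w m) := by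
      funext m
      by_cases hm : m ≤ k
      · simp only [pval, if_pos hm, inl_image_inter, hwdef]
        rfl
      · by_cases hm2 : m = k+1
        · simp only [pval, if_neg hm, if_pos hm2, hwdef,
            Set.insert_inter_of_notMem (hashP_not_mem_inl Γ), inl_image_inter]
          rfl
        · simp only [pval, if_neg hm, if_neg hm2, inl_image_inter, hwdef]
          rfl
    -- the valuation changes at every factorization position up to k+1
    have hchange : ∀ m, 1 ≤ m → m ≤ k+1 → v (factPos v (m-1)) ≠ v (factPos v m) := by
      intro m hm1 hm2
      have hm1' : (m-1)+1 = m := by omega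
      have hsm : factPos v m ∈ startSet v := by
        rcases Nat.eq_or_lt_of_le hm2 with h' | h'
        · rw [h']; exact hstart
        · rcases factPos_mem v m with hs | ht
          · exact hs
          · exact absurd hstart (ht _ (hmono (show m < k+1 by omega)))
      have h0 : factPos v m ≠ 0 := by
        have := hmono (show m-1 < m by omega); omega
      rcases hsm with h' | h'
      · omega
      · have hc : v (factPos v m - 1) = v (factPos v (m-1)) := by
          refine const_on_block v (k := m-1) ?_ ?_
          · have := hmono (show m-1 < m by omega); omega
          · rw [hm1']; omega
        rw [hc] at h'
        exact h'
    have hik : v i = v (factPos v k) := const_on_block v (le_of_lt h1) h2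
    set e : ℕ → ℕ := fun m => if m ≤ k then m else m + 1 with hedef
    have hemono : StrictMono e := by
      intro a b hab
      simp only [hedef]
      split <;> split <;> omega
    have hrange : ∀ n, n ∈ Set.range e ↔ n ≠ k+1 := by
      intro n
      constructor
      · rintro ⟨m, rfl⟩
        simp only [hedef]
        split <;> omega
      · intro hn
        rcases Nat.lt_or_ge n (k+1) with h' | h'
        · exact ⟨n, by simp only [hedef]; rw [if_pos (by omega)]⟩
        · exact ⟨n-1, by simp only [hedef]; rw [if_neg (by omega)]; omega⟩
    -- w-values
    have hwle : ∀ m, m ≤ k → w m = v (factPos v m) := fun m hm => by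
      simp only [hwdef]; rw [if_pos hm]
    have hwk1 : w (k+1) = v (factPos v k) := by
      simp only [hwdef]; rw [if_neg (by omega)]; simpa using hik
    have hwge : ∀ m, k+2 ≤ m → w m = v (factPos v (m-1)) := fun m hm => by
      simp only [hwdef]; rw [if_neg (by omega), if_neg (by omega)]
    have hk2s : k+2 ∈ startSet w := by
      right
      have e1 : w (k+2-1) = v (factPos v k) := by
        simp only [show k+2-1 = k+1 from rfl]; exact hwk1
      have e2 : w (k+2) = v (factPos v (k+1)) := by
        rw [hwge (k+2) le_rfl]; simp
      rw [e1, e2]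
      exact fun h => hne h.symm
    have hw_eq : ∀ n, n ∈ omegaFact w ↔ n ∈ Set.range e := by
      intro n
      rw [hrange]
      constructor
      · intro hA
        intro hnk
        subst hnk
        rcases hA with hs | ht
        · rcases hs with h' | h'
          · omega
          · apply h'
            have e1 : w (k+1-1) = v (factPos v k) := by
              simp only [show k+1-1 = k from rfl]; exact hwle k le_rfl
            rw [e1, hwk1]
        · exact ht (k+2) (by omega) hk2s
      · intro hn
        rcases Nat.eq_zero_or_pos n with h0 | h0
        · subst h0; exact Or.inl (zero_mem_startSet w)
        · by_cases hnk : n ≤ k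
          · left; right
            have e1 : w n = v (factPos v n) := hwle n hnk
            have e2 : w (n-1) = v (factPos v (n-1)) := hwle (n-1) (by omega)
            rw [e1, e2]
            exact hchange n h0 (by omega)
          · by_cases hnk2 : n = k+2
            · subst hnk2; exact Or.inl hk2s
            · -- n ≥ k+3
              have hn3 : k+3 ≤ n := by omega
              by_cases hs : factPos v (n-1) ∈ startSet v
              · left; right
                have e1 : w n = v (factPos v (n-1)) := hwge n (by omega)
                have e2 : w (n-1) = v (factPos v (n-2)) := by
                  rw [hwge (n-1) (by omega), show n-1-1 = n-2 by omega]
                rw [e1, e2]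
                have hh := hchange  -- not applicable here (n-1 may exceed k+1); do directly
                rcases hs with h' | h'
                · have := hmono (show n-2 < n-1 by omega); omega
                · have hc : v (factPos v (n-1) - 1) = v (factPos v (n-2)) := by
                    refine const_on_block v (k := n-2) ?_ ?_
                    · have := hmono (show n-2 < n-1 by omega); omega
                    · have := hmono (show n-2 < n-1 by omega)
                      rw [show n-2+1 = n-1 by omega]
                      omega
                  rw [hc] at h'
                  exact h'
              · -- tail case: everything after n is constant
                right
                intro j hj hjs
                have hs' : factPos v ((n-2)+1) ∉ startSet v := by
                  rw [show n-2+1 = n-1 by omega]; exact hs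
                have e1 : w j = v (factPos v (n-2)) := by
                  rw [hwge j (by omega)]
                  exact tail_const v hs' (hmono.monotone (by omega))
                have e2 : w (j-1) = v (factPos v (n-2)) := by
                  rw [hwge (j-1) (by omega)]
                  exact tail_const v hs' (hmono.monotone (by omega))
                rcases hjs with h' | h'
                · omega
                · exact h' (by rw [e1, e2])
    have hfp : ∀ m, factPos (pval (Sum.inl '' Γ : Set (AP ⊕ Unit))
        (fun m => if m ≤ k then Sum.inl '' σ (factPos v m)
          else if m = k + 1 then insert hashP (Sum.inl '' σ i)
          else Sum.inl '' σ (factPos v (m - 1)))) m = e m := by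
      intro m
      rw [hpv, factPos_comp_inj (Set.image_injective.mpr Sum.inl_injective) w]
      exact factPos_eq_ofRange hemono hw_eq m
    funext m
    show (fun m => if m ≤ k then Sum.inl '' σ (factPos v m)
          else if m = k + 1 then insert hashP (Sum.inl '' σ i)
          else Sum.inl '' σ (factPos v (m - 1))) (factPos (pval (Sum.inl '' Γ) _) m) = _
    rw [hfp m]
    by_cases hm : m ≤ k
    · simp only [hedef, if_pos hm]
    · simp only [hedef, if_neg hm]

end WF

section FWD

variable {AP S : Type}

/-- Summary edge of `stutterKripke` between consecutive factorization positions. -/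
lemma step_edge (K : Kripke AP S) (F : Set S) (Γ : Set AP)
    (π : ℕ → S) (hE : ∀ i, K.E (π i) (π (i+1))) (t : ℕ) (b c : Bool)
    (hc : c = true ↔ ∃ j, factPos (pval Γ fun i => K.lab (π i)) t < j ∧
      j ≤ factPos (pval Γ fun i => K.lab (π i)) (t+1) ∧ π j ∈ F) :
    (stutterKripke K F Γ).E (π (factPos (pval Γ fun i => K.lab (π i)) t), b, false)
      (π (factPos (pval Γ fun i => K.lab (π i)) (t+1)), c, false) := by
  set v := pval Γ (fun i => K.lab (π i)) with hv
  set ℓ := factPos v with hℓ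
  have hmono : StrictMono ℓ := factPos_strictMono v
  have hlt : ℓ t < ℓ (t+1) := hmono (by omega)
  have hval : ∀ j k, ℓ k ≤ j → j < ℓ (k+1) → K.lab (π j) ∩ Γ = K.lab (π (ℓ k)) ∩ Γ :=
    fun j k hj1 hj2 => const_on_block v hj1 hj2
  rcases block_dichotomy v t with ⟨hs, hne⟩ | ⟨heq, _⟩
  · have hR : RGamma K Γ (π (ℓ t)) (π (ℓ (t+1))) := by
      refine ⟨fun h => hne h.symm, ℓ (t+1) - ℓ t, fun s => π (ℓ t + s), by omega, rfl,
        ?_, ?_, ?_⟩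
      · show π (ℓ t + (ℓ (t+1) - ℓ t)) = π (ℓ (t+1))
        congr 1
        omega
      · intro s hs'
        exact hE (ℓ t + s)
      · intro s hs'
        exact hval (ℓ t + s) t (by omega) (by omega)
    by_cases hacc : c = true
    · obtain ⟨j, hj1, hj2, hjF⟩ := hc.mp hacc
      right; left
      refine ⟨⟨hR.1, ℓ (t+1) - ℓ t, fun s => π (ℓ t + s), by omega, rfl, ?_, ?_, ?_,
        j - ℓ t, by omega, ?_⟩, rfl, hacc⟩
      · show π (ℓ t + (ℓ (t+1) - ℓ t)) = π (ℓ (t+1))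
        congr 1
        omega
      · intro s hs'
        exact hE (ℓ t + s)
      · intro s hs'
        exact hval (ℓ t + s) t (by omega) (by omega)
      · show π (ℓ t + (j - ℓ t)) ∈ F
        rw [show ℓ t + (j - ℓ t) = j by omega]
        exact hjF
    · left
      refine ⟨Or.inr hR, rfl, ?_⟩
      constructor
      · intro h; exact absurd h hacc
      · intro hF
        exact absurd (hc.mpr ⟨ℓ (t+1), hlt, le_rfl, hF⟩) hacc
  · left
    refine ⟨Or.inl (show K.E (π (ℓ t)) (π (ℓ (t+1))) from by
      rw [show ℓ (t+1) = ℓ t + 1 from heq]; exact hE (ℓ t)), rfl, ?_⟩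
    rw [hc]
    have heq' : ℓ (t+1) = ℓ t + 1 := heq
    constructor
    · rintro ⟨j, hj1, hj2, hjF⟩
      have hj : j = ℓ (t+1) := by omega
      exact hj ▸ hjF
    · intro hF
      exact ⟨ℓ (t+1), by omega, le_rfl, hF⟩

lemma fwd_pure (K : Kripke AP S) (F : Set S) (Γ : Set AP) {σ : ℕ → Set AP}
    (hσ : σ ∈ K.fairTraces F) :
    (fun m => (Sum.inl '' pstfr Γ σ m : Set (AP ⊕ Unit))) ∈
      (stutterKripke K F Γ).fairTraces stutterFair := by
  classical
  obtain ⟨π, ⟨hinit, hE⟩, hfair, hσeq⟩ := hσ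
  subst hσeq
  set v := pval Γ (fun i => K.lab (π i)) with hv
  set ℓ := factPos v with hℓ
  have hmono : StrictMono ℓ := factPos_strictMono v
  set accb : ℕ → Bool := fun m => match m with
    | 0 => false
    | m+1 => decide (∃ j, ℓ m < j ∧ j ≤ ℓ (m+1) ∧ π j ∈ F) with haccb
  have haccT : ∀ m, accb (m+1) = true ↔ ∃ j, ℓ m < j ∧ j ≤ ℓ (m+1) ∧ π j ∈ F := by
    intro m; simp [haccb]
  refine ⟨fun m => (π (ℓ m), accb m, false), ⟨⟨?_, rfl, rfl⟩, ?_⟩, ?_, ?_⟩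
  · show π (ℓ 0) ∈ K.init
    rw [hℓ, factPos_zero]
    exact hinit
  · intro m
    exact step_edge K F Γ π hE m (accb m) (accb (m+1)) (haccT m)
  · apply Set.infinite_of_forall_exists_gt
    intro a
    obtain ⟨j, hjF, hj⟩ := hfair.exists_gt (ℓ a)
    have hP0 : ℓ 0 < j := by rw [hℓ, factPos_zero]; omega
    set m₀ := Nat.findGreatest (fun m => ℓ m < j) j with hm₀def
    have hm₀ : ℓ m₀ < j :=
      Nat.findGreatest_spec (P := fun m => ℓ m < j) (Nat.zero_le j) hP0
    have hnext : j ≤ ℓ (m₀+1) := by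
      by_cases hb : m₀ + 1 ≤ j
      · have := Nat.findGreatest_is_greatest (show m₀ < m₀ + 1 by omega) hb
        simpa using this
      · have := hmono.le_apply (x := m₀+1)
        omega
    refine ⟨m₀ + 1, ?_, ?_⟩
    · show accb (m₀+1) = true
      exact (haccT m₀).mpr ⟨j, hm₀, hnext, hjF⟩
    · have : ℓ a < ℓ (m₀ + 1) := by omega
      exact hmono.lt_iff_lt.mp this
  · funext m
    show Sum.inl '' pstfr Γ (fun i => K.lab (π i)) m
        = Sum.inl '' K.lab (π (ℓ m)) ∪ (if (false : Bool) = true then {hashP} else ∅)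
    rw [if_neg (by simp), Set.union_empty]
    rfl

lemma fwd_hash (K : Kripke AP S) (F : Set S) (Γ : Set AP) {σ : ℕ → Set AP}
    (hσ : σ ∈ K.fairTraces F) (k i : ℕ)
    (h1 : factPos (pval Γ σ) k < i) (h2 : i < factPos (pval Γ σ) (k+1)) :
    (fun m => if m ≤ k then (Sum.inl '' σ (factPos (pval Γ σ) m) : Set (AP ⊕ Unit))
      else if m = k + 1 then insert hashP (Sum.inl '' σ i)
      else Sum.inl '' σ (factPos (pval Γ σ) (m - 1))) ∈
      (stutterKripke K F Γ).fairTraces stutterFair := by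
  classical
  obtain ⟨π, ⟨hinit, hE⟩, hfair, hσeq⟩ := hσ
  subst hσeq
  set v := pval Γ (fun i => K.lab (π i)) with hv
  set ℓ := factPos v with hℓ
  have hmono : StrictMono ℓ := factPos_strictMono v
  have hval : ∀ j t, ℓ t ≤ j → j < ℓ (t+1) → K.lab (π j) ∩ Γ = K.lab (π (ℓ t)) ∩ Γ :=
    fun j t hj1 hj2 => const_on_block v hj1 hj2
  obtain ⟨hstart, hne⟩ := start_of_gap v h1 h2
  set accb : ℕ → Bool := fun m =>
    if m ≤ 0 then false
    else if m ≤ k then decide (∃ j, ℓ (m-1) < j ∧ j ≤ ℓ m ∧ π j ∈ F)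
    else if m ≤ k+1 then decide (∃ j, ℓ k < j ∧ j ≤ i ∧ π j ∈ F)
    else if m ≤ k+2 then decide (∃ j, i < j ∧ j ≤ ℓ (k+1) ∧ π j ∈ F)
    else decide (∃ j, ℓ (m-2) < j ∧ j ≤ ℓ (m-1) ∧ π j ∈ F) with haccb
  set P : ℕ → S × Bool × Bool := fun m =>
    if m ≤ k then (π (ℓ m), accb m, false)
    else if m ≤ k+1 then (π i, accb m, true)
    else (π (ℓ (m-1)), accb m, false) with hP
  have hPle : ∀ m, m ≤ k → P m = (π (ℓ m), accb m, false) := by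
    intro m hm; simp only [hP]; rw [if_pos hm]
  have hPk1 : P (k+1) = (π i, accb (k+1), true) := by
    simp only [hP]; rw [if_neg (by omega), if_pos (by omega)]
  have hPge : ∀ m, k+2 ≤ m → P m = (π (ℓ (m-1)), accb m, false) := by
    intro m hm; simp only [hP]; rw [if_neg (by omega), if_neg (by omega)]
  have hPacc : ∀ m, (P m).2.1 = accb m := by
    intro m
    by_cases hm : m ≤ k
    · rw [hPle m hm]
    · by_cases hm2 : m = k+1
      · subst hm2; rw [hPk1]
      · rw [hPge m (by omega)]
  refine ⟨P, ⟨?_, ?_⟩, ?_, ?_⟩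
  · rw [hPle 0 (Nat.zero_le k)]
    refine ⟨?_, ?_, rfl⟩
    · show π (ℓ 0) ∈ K.init
      rw [hℓ, factPos_zero]
      exact hinit
    · show accb 0 = false
      simp only [haccb]
      rw [if_pos (by omega)]
  · intro m
    by_cases hm : m + 1 ≤ k
    · -- ordinary step before the hash block
      rw [hPle m (by omega), hPle (m+1) hm]
      apply step_edge K F Γ π hE m
      simp only [haccb]
      rw [if_neg (by omega), if_pos hm]
      simp only [Nat.add_sub_cancel, decide_eq_true_eq]
      exact Iff.rfl
    · by_cases hmk : m = k
      · -- the RHash edge into the hash state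
        subst hmk
        rw [hPle m le_rfl, hPk1]
        have hvali : K.lab (π i) ∩ Γ = K.lab (π (ℓ m)) ∩ Γ := hval i m (by omega) h2
        have haccval : accb (m+1) = true ↔ ∃ j, ℓ m < j ∧ j ≤ i ∧ π j ∈ F := by
          simp only [haccb]
          rw [if_neg (by omega), if_neg (by omega), if_pos (by omega)]
          simp only [decide_eq_true_eq]
        have hRH : RHash K Γ (π (ℓ m)) (π i) := by
          refine ⟨hvali.symm, i - ℓ m, fun s => π (ℓ m + s), by omega, rfl, ?_, ?_, ?_⟩
          · show π (ℓ m + (i - ℓ m)) = π i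
            congr 1
            omega
          · intro s hs'
            exact hE (ℓ m + s)
          · intro s hs'
            exact hval (ℓ m + s) m (by omega) (by omega)
        by_cases hacc : accb (m+1) = true
        · obtain ⟨j, hj1, hj2, hjF⟩ := haccval.mp hacc
          right; right; right
          refine ⟨⟨hvali.symm, i - ℓ m, fun s => π (ℓ m + s), by omega, rfl, ?_, ?_, ?_,
            j - ℓ m, by omega, ?_⟩, rfl, rfl, hacc⟩
          · show π (ℓ m + (i - ℓ m)) = π i
            congr 1
            omega
          · intro s hs'
            exact hE (ℓ m + s)
          · intro s hs'
            exact hval (ℓ m + s) m (by omega) (by omega)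
          · show π (ℓ m + (j - ℓ m)) ∈ F
            rw [show ℓ m + (j - ℓ m) = j by omega]
            exact hjF
        · right; right; left
          refine ⟨hRH, rfl, rfl, ?_⟩
          constructor
          · intro h; exact absurd h hacc
          · intro hF
            exact absurd (haccval.mpr ⟨i, h1, le_rfl, hF⟩) hacc
      · by_cases hmk1 : m = k + 1
        · -- the RGamma edge out of the hash state
          subst hmk1
          rw [hPk1, hPge (k+2) le_rfl]
          rw [show k+2-1 = k+1 by omega]
          have hvali : K.lab (π i) ∩ Γ = K.lab (π (ℓ k)) ∩ Γ := hval i k (by omega) h2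
          have hnei : K.lab (π i) ∩ Γ ≠ K.lab (π (ℓ (k+1))) ∩ Γ := by
            rw [hvali]
            exact fun h => hne h.symm
          have haccval : accb (k+2) = true ↔ ∃ j, i < j ∧ j ≤ ℓ (k+1) ∧ π j ∈ F := by
            simp only [haccb]
            rw [if_neg (by omega), if_neg (by omega), if_neg (by omega), if_pos (by omega)]
            simp only [decide_eq_true_eq]
          have hconst : ∀ s, s < ℓ (k+1) - i →
              K.lab (π (i + s)) ∩ Γ = K.lab (π i) ∩ Γ := by
            intro s hs'
            rw [hvali]
            exact hval (i + s) k (by omega) (by omega)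
          by_cases hacc : accb (k+2) = true
          · obtain ⟨j, hj1, hj2, hjF⟩ := haccval.mp hacc
            right; left
            refine ⟨⟨hnei, ℓ (k+1) - i, fun s => π (i + s), by omega, rfl, ?_, ?_, ?_,
              j - i, by omega, ?_⟩, rfl, hacc⟩
            · show π (i + (ℓ (k+1) - i)) = π (ℓ (k+1))
              congr 1
              omega
            · intro s hs'
              exact hE (i + s)
            · exact hconst
            · show π (i + (j - i)) ∈ F
              rw [show i + (j - i) = j by omega]
              exact hjF
          · left
            refine ⟨Or.inr ⟨hnei, ℓ (k+1) - i, fun s => π (i + s), by omega, rfl, ?_, ?_, ?_⟩,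
              rfl, ?_⟩
            · show π (i + (ℓ (k+1) - i)) = π (ℓ (k+1))
              congr 1
              omega
            · intro s hs'
              exact hE (i + s)
            · exact hconst
            · constructor
              · intro h; exact absurd h hacc
              · intro hF
                exact absurd (haccval.mpr ⟨ℓ (k+1), h2, le_rfl, hF⟩) hacc
        · -- ordinary step after the hash block
          have hm2 : k + 2 ≤ m := by omega
          rw [hPge m hm2, hPge (m+1) (by omega)]
          rw [show m + 1 - 1 = m - 1 + 1 by omega]
          apply step_edge K F Γ π hE (m-1)
          simp only [haccb]
          rw [if_neg (by omega), if_neg (by omega), if_neg (by omega), if_neg (by omega)]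
          rw [show m + 1 - 2 = m - 1 by omega, show m + 1 - 1 = m - 1 + 1 by omega]
          simp only [decide_eq_true_eq]
          exact Iff.rfl
  · apply Set.infinite_of_forall_exists_gt
    intro a
    obtain ⟨j, hjF, hj⟩ := hfair.exists_gt (ℓ (a + k + 2))
    have hP0 : ℓ 0 < j := by
      have := hmono.monotone (Nat.zero_le (a+k+2))
      omega
    set m₀ := Nat.findGreatest (fun m => ℓ m < j) j with hm₀def
    have hm₀ : ℓ m₀ < j :=
      Nat.findGreatest_spec (P := fun m => ℓ m < j) (Nat.zero_le j) hP0
    have hnext : j ≤ ℓ (m₀+1) := by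
      by_cases hb : m₀ + 1 ≤ j
      · have := Nat.findGreatest_is_greatest (show m₀ < m₀ + 1 by omega) hb
        simpa using this
      · have := hmono.le_apply (x := m₀+1)
        omega
    have hm₀big : a + k + 2 < m₀ + 1 := by
      apply hmono.lt_iff_lt.mp
      omega
    refine ⟨m₀ + 2, ?_, by omega⟩
    show (P (m₀+2)).2.1 = true
    rw [hPacc]
    simp only [haccb]
    rw [if_neg (by omega), if_neg (by omega), if_neg (by omega), if_neg (by omega)]
    rw [show m₀ + 2 - 2 = m₀ by omega, show m₀ + 2 - 1 = m₀ + 1 by omega]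
    simp only [decide_eq_true_eq]
    exact ⟨j, hm₀, hnext, hjF⟩
  · funext m
    by_cases hm : m ≤ k
    · rw [if_pos hm, hPle m hm]
      show Sum.inl '' K.lab (π (ℓ m))
          = Sum.inl '' K.lab (π (ℓ m)) ∪ (if (false : Bool) = true then {hashP} else ∅)
      rw [if_neg (by simp), Set.union_empty]
    · by_cases hm2 : m = k+1
      · rw [if_neg hm, if_pos hm2]
        subst hm2
        rw [hPk1]
        show insert hashP (Sum.inl '' K.lab (π i))
            = Sum.inl '' K.lab (π i) ∪ (if (true : Bool) = true then {hashP} else ∅)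
        rw [if_pos rfl, Set.union_singleton]
      · rw [if_neg hm, if_neg hm2, hPge m (by omega)]
        show Sum.inl '' K.lab (π (ℓ (m-1)))
            = Sum.inl '' K.lab (π (ℓ (m-1))) ∪ (if (false : Bool) = true then {hashP} else ∅)
        rw [if_neg (by simp), Set.union_empty]

end FWD

section BWD

variable {AP S : Type}

lemma bwd_main (K : Kripke AP S) (F : Set S) (Γ : Set AP) {τ : ℕ → Set (AP ⊕ Unit)}
    (hτf : τ ∈ (stutterKripke K F Γ).fairTraces stutterFair)
    (hwf : WellFormed Γ τ) : τ ∈ stfrHash Γ (K.fairTraces F) := by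
  classical
  obtain ⟨P, ⟨hinit, hEdge⟩, hfair, hτeq⟩ := hτf
  subst hτeq
  -- expand every edge of the path into a finite path of K
  have hexp : ∀ m, ∃ L : ℕ, ∃ ρ : ℕ → S, 1 ≤ L ∧ ρ 0 = (P m).1 ∧ ρ L = (P (m+1)).1 ∧
      (∀ t < L, K.E (ρ t) (ρ (t+1))) ∧
      (∀ t < L, K.lab (ρ t) ∩ Γ = K.lab (P m).1 ∩ Γ) ∧
      ((P (m+1)).2.1 = true → ∃ t ≤ L, ρ t ∈ F) ∧
      ((P (m+1)).2.2 = true → K.lab (P m).1 ∩ Γ = K.lab (P (m+1)).1 ∩ Γ) ∧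
      ((P (m+1)).2.2 = false → K.lab (P m).1 ∩ Γ = K.lab (P (m+1)).1 ∩ Γ → L = 1) := by
    intro m
    rcases hEdge m with ⟨hKE, hh, hacc⟩ | ⟨hR, hh, hacc⟩ |
      ⟨hR, hsh, hh, hacc⟩ | ⟨hR, hsh, hh, hacc⟩
    · rcases hKE with hKE | hR
      · refine ⟨1, fun t => if t ≤ 0 then (P m).1 else (P (m+1)).1, le_rfl,
          ?_, ?_, ?_, ?_, ?_, ?_, fun _ _ => rfl⟩
        · show (if (0:ℕ) ≤ 0 then (P m).1 else (P (m+1)).1) = (P m).1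
          rw [if_pos le_rfl]
        · show (if (1:ℕ) ≤ 0 then (P m).1 else (P (m+1)).1) = (P (m+1)).1
          rw [if_neg (by omega)]
        · intro t ht
          have ht0 : t = 0 := by omega
          subst ht0
          show K.E (if (0:ℕ) ≤ 0 then (P m).1 else (P (m+1)).1)
            (if (0+1:ℕ) ≤ 0 then (P m).1 else (P (m+1)).1)
          rw [if_pos le_rfl, if_neg (by omega)]
          exact hKE
        · intro t ht
          have ht0 : t = 0 := by omega
          subst ht0
          show K.lab (if (0:ℕ) ≤ 0 then (P m).1 else (P (m+1)).1) ∩ Γ = K.lab (P m).1 ∩ Γ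
          rw [if_pos le_rfl]
        · intro ha
          refine ⟨1, le_rfl, ?_⟩
          show (if (1:ℕ) ≤ 0 then (P m).1 else (P (m+1)).1) ∈ F
          rw [if_neg (by omega)]
          exact hacc.mp ha
        · intro hht
          rw [hh] at hht
          exact absurd hht (by simp)
      · obtain ⟨hneq, L, ρ, hL, hρ0, hρL, hρE, hρv⟩ := hR
        refine ⟨L, ρ, hL, hρ0, hρL, hρE, hρv, ?_, ?_, ?_⟩
        · intro ha
          exact ⟨L, le_rfl, by rw [hρL]; exact hacc.mp ha⟩
        · intro hht
          rw [hh] at hht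
          exact absurd hht (by simp)
        · intro _ hEq
          exact absurd hEq hneq
    · obtain ⟨hneq, L, ρ, hL, hρ0, hρL, hρE, hρv, t, htL, htF⟩ := hR
      refine ⟨L, ρ, hL, hρ0, hρL, hρE, hρv, fun _ => ⟨t, htL, htF⟩, ?_, ?_⟩
      · intro hht
        rw [hh] at hht
        exact absurd hht (by simp)
      · intro _ hEq
        exact absurd hEq hneq
    · obtain ⟨hveq, L, ρ, hL, hρ0, hρL, hρE, hρv⟩ := hR
      refine ⟨L, ρ, hL, hρ0, hρL, hρE, hρv, ?_, fun _ => hveq, ?_⟩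
      · intro ha
        exact ⟨L, le_rfl, by rw [hρL]; exact hacc.mp ha⟩
      · intro hht
        rw [hh] at hht
        exact absurd hht (by simp)
    · obtain ⟨hveq, L, ρ, hL, hρ0, hρL, hρE, hρv, t, htL, htF⟩ := hR
      refine ⟨L, ρ, hL, hρ0, hρL, hρE, hρv, fun _ => ⟨t, htL, htF⟩, fun _ => hveq, ?_⟩
      intro hht
      rw [hh] at hht
      exact absurd hht (by simp)
  choose L ρ hL hρ0 hρL hρE hρv hρF hρhash hρlen using hexp
  -- concatenate the finite paths
  set g : ℕ → ℕ := fun m => Nat.rec 0 (fun m' ih => ih + L m') m with hgdef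
  have hg0 : g 0 = 0 := rfl
  have hgs : ∀ m, g (m+1) = g m + L m := fun m => rfl
  have hgmono : StrictMono g := by
    apply strictMono_nat_of_lt_succ
    intro m
    rw [hgs]
    have := hL m
    omega
  have hgex : ∀ j, ∃ m, j < g (m+1) := by
    intro j
    refine ⟨j, ?_⟩
    have := hgmono.le_apply (x := j+1)
    omega
  set blk : ℕ → ℕ := fun j => Nat.find (hgex j) with hblkdef
  have hblk2 : ∀ j, j < g (blk j + 1) := fun j => Nat.find_spec (hgex j)
  have hblk1 : ∀ j, g (blk j) ≤ j := by
    intro j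
    rcases Nat.eq_zero_or_pos (blk j) with h0 | h0
    · rw [h0, hg0]; omega
    · have hmin := Nat.find_min (hgex j) (show blk j - 1 < blk j by omega)
      rw [show blk j - 1 + 1 = blk j by omega] at hmin
      omega
  have hblk_eq : ∀ m j, g m ≤ j → j < g (m+1) → blk j = m := by
    intro m j h1 h2
    have hle : blk j ≤ m := Nat.find_min' (hgex j) h2
    rcases Nat.eq_or_lt_of_le hle with hc | hc
    · exact hc
    · exfalso
      have hmm : g (blk j + 1) ≤ g m := hgmono.monotone (show blk j + 1 ≤ m by omega)
      have := hblk2 j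
      omega
  have hblkg : ∀ m, blk (g m) = m := by
    intro m
    apply hblk_eq m (g m) le_rfl
    rw [hgs]
    have := hL m
    omega
  set π : ℕ → S := fun j => ρ (blk j) (j - g (blk j)) with hπdef
  have hπg : ∀ m, π (g m) = (P m).1 := by
    intro m
    show ρ (blk (g m)) (g m - g (blk (g m))) = _
    rw [hblkg m, Nat.sub_self]
    exact hρ0 m
  have hπE : ∀ j, K.E (π j) (π (j+1)) := by
    intro j
    have h1 := hblk1 j
    have h2 := hblk2 j
    have h3 := hgs (blk j)
    rcases Nat.lt_or_ge (j+1) (g (blk j + 1)) with hlt | hge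
    · have hb : blk (j+1) = blk j := hblk_eq (blk j) (j+1) (by omega) hlt
      show K.E (ρ (blk j) (j - g (blk j))) (ρ (blk (j+1)) (j+1 - g (blk (j+1))))
      rw [hb, show j + 1 - g (blk j) = (j - g (blk j)) + 1 by omega]
      exact hρE (blk j) (j - g (blk j)) (by omega)
    · have hj1 : j + 1 = g (blk j + 1) := by omega
      show K.E (ρ (blk j) (j - g (blk j))) (π (j+1))
      have hπ1 : π (j+1) = (P (blk j + 1)).1 := by
        rw [hj1]
        exact hπg (blk j + 1)
      rw [hπ1, ← hρL (blk j), show j - g (blk j) = L (blk j) - 1 by omega]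
      have hstep := hρE (blk j) (L (blk j) - 1) (by have := hL (blk j); omega)
      rw [show L (blk j) - 1 + 1 = L (blk j) by have := hL (blk j); omega] at hstep
      exact hstep
  have hπv : ∀ j, K.lab (π j) ∩ Γ = K.lab (P (blk j)).1 ∩ Γ := by
    intro j
    exact hρv (blk j) (j - g (blk j))
      (by have := hblk1 j; have := hblk2 j; have := hgs (blk j); omega)
  have hπ0 : π 0 ∈ K.init := by
    have h := hπg 0
    rw [hg0] at h
    rw [h]
    exact hinit.1
  -- fairness of the expanded path
  have hσfair : {j | π j ∈ F}.Infinite := by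
    apply Set.infinite_of_forall_exists_gt
    intro a
    obtain ⟨m, hmf, hma⟩ := hfair.exists_gt (a+1)
    have hm1 : 1 ≤ m := by omega
    have hmf' : (P (m-1+1)).2.1 = true := by
      rw [show m-1+1 = m by omega]
      exact hmf
    obtain ⟨t, htL, htF⟩ := hρF (m-1) hmf'
    refine ⟨g (m-1) + t, ?_, ?_⟩
    · show π (g (m-1) + t) ∈ F
      rcases Nat.lt_or_ge t (L (m-1)) with hc | hc
      · have hb : blk (g (m-1) + t) = m-1 :=
          hblk_eq (m-1) _ (by omega) (by rw [hgs]; omega)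
        show ρ (blk (g (m-1) + t)) (g (m-1) + t - g (blk (g (m-1) + t))) ∈ F
        rw [hb, Nat.add_sub_cancel_left]
        exact htF
      · have ht' : t = L (m-1) := by omega
        have hj : g (m-1) + t = g (m-1+1) := by rw [hgs (m-1), ht']
        rw [hj, hπg (m-1+1), ← hρL (m-1), ← ht']
        exact htF
    · have := hgmono.le_apply (x := m-1)
      omega
  have hσK : (fun j => K.lab (π j)) ∈ K.fairTraces F := ⟨π, ⟨hπ0, hπE⟩, hσfair, rfl⟩
  set V : ℕ → Set AP := fun m => K.lab (P m).1 ∩ Γ with hVdef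
  have hvV : ∀ j, pval Γ (fun j' => K.lab (π j')) j = V (blk j) := fun j => hπv j
  have hlab : ∀ m, (stutterKripke K F Γ).lab (P m)
      = Sum.inl '' K.lab (P m).1 ∪ (if (P m).2.2 = true then {hashP} else ∅) :=
    fun m => rfl
  have hhash : ∀ m, hashP ∈ (stutterKripke K F Γ).lab (P m) ↔ (P m).2.2 = true := by
    intro m
    rw [hlab m]
    constructor
    · intro hm
      rcases hm with hm | hm
      · exact absurd hm (hashP_not_mem_inl _)
      · by_cases hbb : (P m).2.2 = true
        · exact hbb
        · rw [if_neg hbb] at hm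
          exact absurd hm (Set.notMem_empty _)
    · intro hbb
      right
      rw [if_pos hbb]
      exact rfl
  have hpvτ : ∀ a, (stutterKripke K F Γ).lab (P a) ∩ (Sum.inl '' Γ) = Sum.inl '' V a := by
    intro a
    rw [hlab a, Set.union_inter_distrib_right]
    have h2 : (if (P a).2.2 = true then ({hashP} : Set (AP ⊕ Unit)) else ∅)
        ∩ (Sum.inl '' Γ) = ∅ := by
      split
      · rw [Set.singleton_inter_eq_empty]
        exact hashP_not_mem_inl Γ
      · exact Set.empty_inter _
    rw [h2, Set.union_empty, inl_image_inter]
  have hfactτ : factPos (pval (Sum.inl '' Γ)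
      (fun i => (stutterKripke K F Γ).lab (P i))) = factPos V := by
    have hpv2 : pval (Sum.inl '' Γ) (fun i => (stutterKripke K F Γ).lab (P i))
        = fun a => Sum.inl '' V a := funext hpvτ
    rw [hpv2]
    exact factPos_comp_inj (Set.image_injective.mpr Sum.inl_injective) V
  have hVtail : ∀ m, (∀ j, m < j → j ∉ startSet V) → ∀ j, m ≤ j → V j = V m := by
    intro m hm j hj
    exact const_of_no_start V hj (fun t ht _ => hm t ht)
  have hstartv : ∀ m, 1 ≤ m → V (m-1) ≠ V m →
      g m ∈ startSet (pval Γ (fun j => K.lab (π j))) := by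
    intro m h1 hne2
    right
    have hgm := hgmono (show m-1 < m by omega)
    have e1 : pval Γ (fun j => K.lab (π j)) (g m) = V m := by
      rw [hvV, hblkg]
    have e2 : pval Γ (fun j => K.lab (π j)) (g m - 1) = V (m-1) := by
      rw [hvV]
      have hb2 : blk (g m - 1) = m-1 := by
        apply hblk_eq (m-1) _ (by omega)
        rw [show m-1+1 = m by omega]
        omega
      rw [hb2]
    rw [e1, e2]
    exact hne2
  have hblkge : ∀ m x, g m ≤ x → m ≤ blk x := by
    intro m x hx
    by_contra hc
    push_neg at hc
    have h5 : g (blk x + 1) ≤ g m := hgmono.monotone (show blk x + 1 ≤ m by omega)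
    have := hblk2 x
    omega
  have htailv : ∀ m, (∀ j, m < j → j ∉ startSet V) →
      ∀ x, g m < x → x ∉ startSet (pval Γ (fun j => K.lab (π j))) := by
    intro m hm x hx hxs
    have hVc := hVtail m hm
    have hbx : m ≤ blk x := hblkge m x (by omega)
    have hbx1 : m ≤ blk (x-1) := hblkge m (x-1) (by omega)
    rcases hxs with h0 | hne2
    · omega
    · apply hne2
      rw [hvV (x-1), hvV x, hVc _ hbx1, hVc _ hbx]
  rcases hwf with ⟨hnh, hps⟩ | ⟨k, hhk, hps⟩
  · -- no hash: the trace is the stutter trace of the expansion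
    have hbf : ∀ m, (P m).2.2 = false := by
      intro m
      cases hbb : (P m).2.2
      · rfl
      · exact absurd ((hhash m).mpr hbb) (hnh m)
    have HV : ∀ m, V (factPos V m) = V m := by
      intro m
      have h0 := congrFun hps m
      have h1 : (stutterKripke K F Γ).lab (P (factPos V m))
          = (stutterKripke K F Γ).lab (P m) := by
        rw [show (stutterKripke K F Γ).lab (P (factPos V m))
            = pstfr (Sum.inl '' Γ) (fun i => (stutterKripke K F Γ).lab (P i)) m from by
          rw [← hfactτ]; rfl]
        exact h0
      have h4 : (Sum.inl '' V (factPos V m) : Set (AP ⊕ Unit)) = Sum.inl '' V m := by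
        rw [← hpvτ, ← hpvτ, h1]
      exact (Set.image_eq_image Sum.inl_injective).mp h4
    have hAV : ∀ n, n ∈ omegaFact V ↔ n ∈ Set.range (id : ℕ → ℕ) := by
      apply omegaFact_eq_range V id strictMono_id
      · intro n hn
        exact absurd ⟨n, rfl⟩ hn
      · exact HV
    have hrg : ∀ n, n ∈ omegaFact (pval Γ fun j => K.lab (π j)) ↔ n ∈ Set.range g := by
      intro n
      constructor
      · intro hA
        by_contra hc
        have hgn : g (blk n) < n := by
          rcases Nat.eq_or_lt_of_le (hblk1 n) with h' | h'
          · exact absurd ⟨blk n, h'⟩ hc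
          · exact h'
        rcases hA with hs | ht
        · rcases hs with h0 | hne2
          · omega
          · apply hne2
            have hb1 : blk (n-1) = blk n :=
              hblk_eq (blk n) (n-1) (by omega) (by have := hblk2 n; omega)
            rw [hvV (n-1), hvV n, hb1]
        · have hL2 : 2 ≤ L (blk n) := by
            have := hgs (blk n); have := hblk2 n; omega
          have hVne : V (blk n) ≠ V (blk n + 1) := by
            intro hVeq
            have := hρlen (blk n) (hbf (blk n + 1)) hVeq
            omega
          refine ht (g (blk n + 1)) (by have := hblk2 n; omega) ?_
          exact hstartv (blk n + 1) (by omega) (by rw [Nat.add_sub_cancel]; exact hVne)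
      · rintro ⟨m, rfl⟩
        rcases Nat.eq_zero_or_pos m with h0 | h0
        · subst h0
          rw [hg0]
          exact Or.inl (zero_mem_startSet _)
        · have hmA : m ∈ omegaFact V := (hAV m).mpr ⟨m, rfl⟩
          rcases hmA with hs | ht
          · rcases hs with h0' | hne2
            · omega
            · exact Or.inl (hstartv m h0 hne2)
          · exact Or.inr (htailv m ht)
    have hfv : ∀ m, factPos (pval Γ fun j => K.lab (π j)) m = g m :=
      factPos_eq_ofRange hgmono hrg
    left
    refine ⟨(fun j => K.lab (π j)), hσK, ?_⟩
    funext m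
    show (stutterKripke K F Γ).lab (P m)
        = Sum.inl '' pstfr Γ (fun j => K.lab (π j)) m
    have hps2 : pstfr Γ (fun j => K.lab (π j)) m = K.lab (P m).1 := by
      show K.lab (π (factPos (pval Γ fun j => K.lab (π j)) m)) = _
      rw [hfv m, hπg m]
    rw [hps2, hlab m, if_neg (by rw [hbf m]; simp), Set.union_empty]
  · -- hash case
    have hb2 : ∀ m, ((P m).2.2 = true ↔ m = k+1) := fun m => (hhash m).symm.trans (hhk m)
    have hbf : ∀ m, m ≠ k+1 → (P m).2.2 = false := by
      intro m hm
      cases hbb : (P m).2.2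
      · rfl
      · exact absurd ((hb2 m).mp hbb) hm
    have hbk : (P (k+1)).2.2 = true := (hb2 (k+1)).mpr rfl
    have hVk : V k = V (k+1) := hρhash k hbk
    set e : ℕ → ℕ := fun m => if m ≤ k then m else m+1 with hedef
    have hemono : StrictMono e := by
      intro a b hab
      simp only [hedef]
      split <;> split <;> omega
    have hrange : ∀ n, n ∈ Set.range e ↔ n ≠ k+1 := by
      intro n
      constructor
      · rintro ⟨m, rfl⟩
        simp only [hedef]
        split <;> omega
      · intro hn
        rcases Nat.lt_or_ge n (k+1) with h' | h'
        · exact ⟨n, by simp only [hedef]; rw [if_pos (by omega)]⟩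
        · exact ⟨n-1, by simp only [hedef]; rw [if_neg (by omega)]; omega⟩
    have hlabfix : ∀ m, (stutterKripke K F Γ).lab (P (factPos V m))
        = if m ≤ k then (stutterKripke K F Γ).lab (P m)
          else (stutterKripke K F Γ).lab (P (m+1)) := by
      intro m
      have h0 := congrFun hps m
      rw [show (stutterKripke K F Γ).lab (P (factPos V m))
          = pstfr (Sum.inl '' Γ) (fun i => (stutterKripke K F Γ).lab (P i)) m from by
        rw [← hfactτ]; rfl]
      rw [h0]
    have HV : ∀ m, V (factPos V m) = V (e m) := by
      intro m
      have h4 : (Sum.inl '' V (factPos V m) : Set (AP ⊕ Unit)) = Sum.inl '' V (e m) := by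
        rw [← hpvτ, ← hpvτ, hlabfix m]
        by_cases hm : m ≤ k
        · rw [if_pos hm, show e m = m from by simp only [hedef]; rw [if_pos hm]]
        · rw [if_neg hm, show e m = m+1 from by simp only [hedef]; rw [if_neg hm]]
      exact (Set.image_eq_image Sum.inl_injective).mp h4
    have hk1A : k+1 ∉ omegaFact V := by
      intro hk1
      have hfc : factPos V (Nat.count (· ∈ omegaFact V) (k+1)) = k+1 :=
        Nat.nth_count hk1
      have hmem : hashP ∈ (stutterKripke K F Γ).lab (P (k+1)) := (hhk (k+1)).mpr rfl
      rw [← hfc, hlabfix (Nat.count (· ∈ omegaFact V) (k+1))] at hmem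
      by_cases hcc : Nat.count (· ∈ omegaFact V) (k+1) ≤ k
      · rw [if_pos hcc] at hmem
        exact absurd ((hhk _).mp hmem) (by omega)
      · rw [if_neg hcc] at hmem
        exact absurd ((hhk _).mp hmem) (by omega)
    have hAV : ∀ n, n ∈ omegaFact V ↔ n ∈ Set.range e := by
      apply omegaFact_eq_range V e hemono
      · intro n hn hmem
        have hnk : n = k+1 := by
          by_contra hne3
          exact hn ((hrange n).mpr hne3)
        rw [hnk] at hmem
        exact hk1A hmem
      · exact HV
    have hlater : ∃ b', k+1 < b' ∧ b' ∈ startSet V := by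
      by_contra hbb
      push_neg at hbb
      exact hk1A (Or.inr hbb)
    obtain ⟨b', hb'1, hb'2⟩ := hlater
    have hb'ne : V (b'-1) ≠ V b' := by
      rcases hb'2 with h0 | hx
      · omega
      · exact hx
    have hgb' : g b' ∈ startSet (pval Γ (fun j => K.lab (π j))) :=
      hstartv b' (by omega) hb'ne
    have hrg : ∀ n, n ∈ omegaFact (pval Γ fun j => K.lab (π j))
        ↔ n ∈ Set.range (fun m => g (e m)) := by
      intro n
      constructor
      · intro hA
        by_contra hc
        by_cases hng : ∃ m, g m = n
        · obtain ⟨m, rfl⟩ := hng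
          have hmk1 : m = k+1 := by
            by_contra hmk
            apply hc
            rcases Nat.lt_or_ge m (k+1) with h' | h'
            · exact ⟨m, by simp only [hedef]; rw [if_pos (by omega)]⟩
            · refine ⟨m-1, ?_⟩
              simp only [hedef]
              rw [if_neg (by omega)]
              rw [show m-1+1 = m by omega]
          subst hmk1
          rcases hA with hs | ht
          · rcases hs with h0 | hne2
            · have h00 := hgmono (show 0 < k+1 by omega)
              rw [hg0] at h00
              omega
            · apply hne2
              have hgk := hgmono (show k < k+1 by omega)
              have hb1 : blk (g (k+1) - 1) = k := by
                apply hblk_eq k _ (by omega)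
                rw [show k+1 = k+1 from rfl]
                omega
              rw [hvV (g (k+1) - 1), hvV (g (k+1)), hb1, hblkg (k+1)]
              exact hVk
          · exact ht (g b') (hgmono (show k+1 < b' by omega)) hgb'
        · push_neg at hng
          have hgn : g (blk n) < n := lt_of_le_of_ne (hblk1 n) (hng (blk n))
          rcases hA with hs | ht
          · rcases hs with h0 | hne2
            · omega
            · apply hne2
              have hb1 : blk (n-1) = blk n :=
                hblk_eq (blk n) (n-1) (by omega) (by have := hblk2 n; omega)
              rw [hvV (n-1), hvV n, hb1]
          · by_cases hmk : blk n = k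
            · refine ht (g b') ?_ hgb'
              have h5 := hblk2 n
              have h6 : g (blk n + 1) ≤ g b' := hgmono.monotone (show blk n + 1 ≤ b' by omega)
              omega
            · have hL2 : 2 ≤ L (blk n) := by
                have := hgs (blk n); have := hblk2 n; omega
              have hVne : V (blk n) ≠ V (blk n + 1) := by
                intro hVeq
                have := hρlen (blk n) (hbf (blk n + 1) (by omega)) hVeq
                omega
              refine ht (g (blk n + 1)) (by have := hblk2 n; omega) ?_
              exact hstartv (blk n + 1) (by omega)
                (by rw [Nat.add_sub_cancel]; exact hVne)
      · rintro ⟨m, rfl⟩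
        have hem : 1 ≤ m → 1 ≤ e m := by
          intro h
          simp only [hedef]
          split <;> omega
        rcases Nat.eq_zero_or_pos m with h0 | h0
        · subst h0
          show g (e 0) ∈ omegaFact (pval Γ fun j => K.lab (π j))
          rw [show e 0 = 0 from by simp only [hedef]; rw [if_pos (Nat.zero_le k)], hg0]
          exact Or.inl (zero_mem_startSet _)
        · have hmA : e m ∈ omegaFact V := (hAV (e m)).mpr ⟨m, rfl⟩
          rcases hmA with hs | ht
          · rcases hs with h0' | hne2
            · exact absurd h0' (by have := hem h0; omega)
            · exact Or.inl (hstartv (e m) (hem h0) hne2)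
          · exact Or.inr (htailv (e m) ht)
    have hfv : ∀ m, factPos (pval Γ fun j => K.lab (π j)) m = g (e m) :=
      factPos_eq_ofRange (hgmono.comp hemono) hrg
    right
    refine ⟨(fun j => K.lab (π j)), hσK, k, g (k+1), ?_, ?_, ?_⟩
    · rw [hfv k, show e k = k from by simp only [hedef]; rw [if_pos le_rfl]]
      exact hgmono (show k < k+1 by omega)
    · rw [hfv (k+1), show e (k+1) = k+2 from by simp only [hedef]; rw [if_neg (by omega)]]
      exact hgmono (show k+1 < k+2 by omega)
    · funext m
      by_cases hm : m ≤ k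
      · rw [if_pos hm, hfv m, show e m = m from by simp only [hedef]; rw [if_pos hm]]
        show (stutterKripke K F Γ).lab (P m) = Sum.inl '' K.lab (π (g m))
        rw [hπg m, hlab m, if_neg (by rw [hbf m (by omega)]; simp), Set.union_empty]
      · by_cases hm2 : m = k+1
        · rw [if_neg hm, if_pos hm2]
          subst hm2
          show (stutterKripke K F Γ).lab (P (k+1))
              = insert hashP (Sum.inl '' K.lab (π (g (k+1))))
          rw [hπg (k+1), hlab (k+1), if_pos hbk, Set.union_singleton]
        · rw [if_neg hm, if_neg hm2, hfv (m-1),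
            show e (m-1) = m from by simp only [hedef]; rw [if_neg (by omega)]; omega]
          show (stutterKripke K F Γ).lab (P m) = Sum.inl '' K.lab (π (g m))
          rw [hπg m, hlab m, if_neg (by rw [hbf m hm2]; simp), Set.union_empty]

end BWD

/-- every trace of `stfr^#_Γ(Traces(K,F))` is well-formed, and the
well-formed traces of `(K_Γ, F_Γ)` are exactly `stfr^#_Γ(Traces(K,F))`. -/
theorem stutterKripke_correct {AP S : Type} [Finite S] (K : Kripke AP S)
    (htot : ∀ s, ∃ t, K.E s t) (F : Set S) (Γ : Set AP) (hΓ : Γ.Nonempty) :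
    stfrHash Γ (K.fairTraces F) ⊆ {τ | WellFormed Γ τ} ∧
    {τ | τ ∈ (stutterKripke K F Γ).fairTraces stutterFair ∧ WellFormed Γ τ} =
      stfrHash Γ (K.fairTraces F) := by
  
  constructor
  · intro τ hτ
    rcases hτ with ⟨σ, hσ, rfl⟩ | ⟨σ, hσ, k, i, h1, h2, rfl⟩
    · exact wf_pure Γ σ
    · exact wf_hash Γ σ k i h1 h2
  · apply Set.eq_of_subset_of_subset
    · rintro τ ⟨hτf, hwf⟩
      exact bwd_main K F Γ hτf hwf
    · intro τ hτ
      rcases hτ with ⟨σ, hσ, rfl⟩ | ⟨σ, hσ, k, i, h1, h2, rfl⟩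
      · exact ⟨fwd_pure K F Γ hσ, wf_pure Γ σ⟩
      · exact ⟨fwd_hash K F Γ hσ k i h1 h2, wf_hash Γ σ k i h1 h2⟩
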